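/- Let K_x and M_x be real symmetric positive definite n×n matrices, α > 0, and let β₁, β₂ be nonzero real numbers of opposite sign (β₁β₂ < 0). Set 𝒦 := K_x + α M_x and γ := √(|β₁β₂|). Define the 2n×2n block matrices Ā := [[|β₂| 𝒦, −β₁|β₂| M_x], [|β₁|β₂ M_x, −|β₁| 𝒦]] and P := [[|β₂|(𝒦 + γ M_x), 0], [0, |β₁|(𝒦 + γ M_x)]]. Then every generalized eigenvalue λ of the pencil (Ā, P), i.e. every λ ∈ ℝ with Ā u = λ P u for some nonzero u ∈ ℝ^{2n}, satisfies 1/√2 ≤ |λ| ≤ 1; consequently cond(P⁻¹Ā) ≤ √2. (Theorem on the preconditioner for the real Schur decomposition case.) -/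

import Mathlib

open Matrix

section Aux

variable {n : ℕ}

private lemma psd_smul {M : Matrix (Fin n) (Fin n) ℝ} (hM : M.PosDef) {c : ℝ} (hc : 0 < c) :
    (c • M).PosDef := by
  exact hM.smul hc

private lemma dp_symm {M : Matrix (Fin n) (Fin n) ℝ} (hM : M.IsHermitian)
    (v w : Fin n → ℝ) : v ⬝ᵥ (M *ᵥ w) = (M *ᵥ v) ⬝ᵥ w := by
  rw [dotProduct_mulVec, ← mulVec_transpose]
  congr 1
  rw [← conjTranspose_eq_transpose_of_trivial, hM.eq]

private lemma pd_pos {M : Matrix (Fin n) (Fin n) ℝ} (hM : M.PosDef) {v : Fin n → ℝ}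
    (hv : v ≠ 0) : 0 < v ⬝ᵥ (M *ᵥ v) := by
  have := hM.dotProduct_mulVec_pos hv
  simpa using this

private lemma psd_nonneg {M : Matrix (Fin n) (Fin n) ℝ} (hM : M.PosDef) (v : Fin n → ℝ) :
    0 ≤ v ⬝ᵥ (M *ᵥ v) := by
  by_cases hv : v = 0
  · simp [hv]
  · exact (pd_pos hM hv).le

/-- Key spectral bound: any eigenvalue of `(G+H)⁻¹ * G * ((G+H)⁻¹ * H)` lies in `(0, 1/4]`. -/
private lemma quarter {G H : Matrix (Fin n) (Fin n) ℝ} (hG : G.PosDef) (hH : H.PosDef)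
    {μ : ℝ} {v : Fin n → ℝ} (hv : v ≠ 0)
    (heq : ((G + H)⁻¹ * G * ((G + H)⁻¹ * H)) *ᵥ v = μ • v) :
    0 < μ ∧ μ ≤ 1 / 4 := by
  set W := G + H with hWdef
  have hW : W.PosDef := hG.add hH
  have hWd : IsUnit W.det := isUnit_iff_isUnit_det _ |>.1 hW.isUnit
  set z : Fin n → ℝ := W⁻¹ *ᵥ (H *ᵥ v) with hz
  have hWz : W *ᵥ z = H *ᵥ v := by
    rw [hz, mulVec_mulVec, mulVec_mulVec, Matrix.mul_nonsing_inv _ hWd, Matrix.one_mul]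
  have hGz : G *ᵥ z = μ • (W *ᵥ v) := by
    have hthis := congrArg (fun w => W *ᵥ w) heq
    simp only [mulVec_mulVec, mulVec_smul] at hthis
    have hmat : W * (W⁻¹ * G * (W⁻¹ * H)) = G * W⁻¹ * H := by
      simp only [← Matrix.mul_assoc]
      rw [Matrix.mul_nonsing_inv _ hWd, Matrix.one_mul]
    rw [hmat] at hthis
    rw [hz, mulVec_mulVec, mulVec_mulVec]
    exact hthis
  -- scalar quadratic-form bookkeeping
  have hz0 : z ≠ 0 := by
    intro h0
    have : H *ᵥ v = 0 := by rw [← hWz, h0, mulVec_zero]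
    have h2 := pd_pos hH hv
    rw [this, dotProduct_zero] at h2
    exact lt_irrefl _ h2
  set Pq : ℝ := v ⬝ᵥ (G *ᵥ v) with hPq
  set Qq : ℝ := v ⬝ᵥ (H *ᵥ v) with hQq
  set Rq : ℝ := z ⬝ᵥ (G *ᵥ z) with hRq
  set g : ℝ := v ⬝ᵥ (G *ᵥ z) with hg
  have hP0 : 0 < Pq := pd_pos hG hv
  have hQ0 : 0 < Qq := pd_pos hH hv
  have hR0 : 0 < Rq := pd_pos hG hz0
  have hWsym : W.IsHermitian := hW.1
  have hGsym : G.IsHermitian := hG.1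
  have hgval : g = μ * (Pq + Qq) := by
    rw [hg, hGz, dotProduct_smul, smul_eq_mul, hWdef, add_mulVec, dotProduct_add]
  have hRval : Rq = μ * Qq := by
    rw [hRq, hGz, dotProduct_smul, smul_eq_mul, dp_symm hWsym, hWz, dotProduct_comm]
  have hμpos : 0 < μ := by
    have := hR0
    rw [hRval] at this
    nlinarith [this, hQ0]
  -- Cauchy–Schwarz for the form G
  have hCS : g ^ 2 ≤ Pq * Rq := by
    have hq : 0 ≤ (g • v - Pq • z) ⬝ᵥ (G *ᵥ (g • v - Pq • z)) :=
      psd_nonneg hG _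
    have hvz : v ⬝ᵥ (G *ᵥ z) = z ⬝ᵥ (G *ᵥ v) := by
      rw [dp_symm hGsym, dotProduct_comm]
    simp only [mulVec_sub, mulVec_smul, dotProduct_sub, sub_dotProduct,
      smul_dotProduct, dotProduct_smul, smul_eq_mul] at hq
    rw [← hg, ← hPq, ← hRq] at hq
    rw [← hvz, ← hg] at hq
    nlinarith [hq, hP0]
  constructor
  · exact hμpos
  · have e1 : g ^ 2 = μ ^ 2 * (Pq + Qq) ^ 2 := by rw [hgval]; ring
    have e2 : Pq * Rq = μ * (Pq * Qq) := by rw [hRval]; ring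
    have h1' : μ ^ 2 * (Pq + Qq) ^ 2 ≤ μ * (Pq * Qq) := by rw [← e1, ← e2]; exact hCS
    have h1'' : μ * (μ * (Pq + Qq) ^ 2) ≤ μ * (Pq * Qq) := by linarith [h1']
    have h1 : μ * (Pq + Qq) ^ 2 ≤ Pq * Qq := (mul_le_mul_iff_right₀ hμpos).mp h1''
    nlinarith [h1, mul_pos hP0 hQ0, mul_nonneg hμpos.le (sq_nonneg (Pq - Qq))]

end Aux

theorem stmt_11 (n : ℕ) (Kx Mx : Matrix (Fin n) (Fin n) ℝ)
    (hKx : Kx.PosDef) (hMx : Mx.PosDef) (α β₁ β₂ : ℝ) (hα : 0 < α)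
    (hβ₁ : β₁ ≠ 0) (hβ₂ : β₂ ≠ 0) (hsign : β₁ * β₂ < 0)
    (𝒦 : Matrix (Fin n) (Fin n) ℝ) (h𝒦 : 𝒦 = Kx + α • Mx)
    (γ : ℝ) (hγ : γ = Real.sqrt |β₁ * β₂|)
    (Abar P : Matrix (Fin n ⊕ Fin n) (Fin n ⊕ Fin n) ℝ)
    (hAbar : Abar = Matrix.fromBlocks (|β₂| • 𝒦) ((-(β₁ * |β₂|)) • Mx)
      ((|β₁| * β₂) • Mx) (-(|β₁| • 𝒦)))
    (hP : P = Matrix.fromBlocks (|β₂| • (𝒦 + γ • Mx)) 0 0 (|β₁| • (𝒦 + γ • Mx))) :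
    (∀ lam : ℝ, (∃ u : Fin n ⊕ Fin n → ℝ, u ≠ 0 ∧ Abar *ᵥ u = lam • (P *ᵥ u)) →
      1 / Real.sqrt 2 ≤ |lam| ∧ |lam| ≤ 1) ∧
    (∀ lam mu : ℝ,
      (∃ u : Fin n ⊕ Fin n → ℝ, u ≠ 0 ∧ Abar *ᵥ u = lam • (P *ᵥ u)) →
      (∃ u : Fin n ⊕ Fin n → ℝ, u ≠ 0 ∧ Abar *ᵥ u = mu • (P *ᵥ u)) →
      |lam| ≤ Real.sqrt 2 * |mu|) := by
  -- scalar preliminaries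
  have ha : (0:ℝ) < |β₁| := abs_pos.mpr hβ₁
  have hb : (0:ℝ) < |β₂| := abs_pos.mpr hβ₂
  have hγpos : 0 < γ := by
    rw [hγ]
    exact Real.sqrt_pos.mpr (abs_pos.mpr hsign.ne)
  have hcc : (-β₁) * β₂ = γ ^ 2 := by
    rw [hγ, Real.sq_sqrt (abs_nonneg _), abs_of_neg hsign]
    ring
  -- matrix preliminaries
  have hG : 𝒦.PosDef := by
    rw [h𝒦]
    exact hKx.add (psd_smul hMx hα)
  have hH : (γ • Mx).PosDef := psd_smul hMx hγpos
  set W : Matrix (Fin n) (Fin n) ℝ := 𝒦 + γ • Mx with hWdef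
  have hW : W.PosDef := hG.add hH
  have hWd : IsUnit W.det := isUnit_iff_isUnit_det _ |>.1 hW.isUnit
  set A : Matrix (Fin n) (Fin n) ℝ := W⁻¹ * 𝒦 with hAdef
  set B : Matrix (Fin n) (Fin n) ℝ := W⁻¹ * Mx with hBdef
  have hAeq : A = 1 - γ • B := by
    have h1 : W⁻¹ * W = 1 := Matrix.nonsing_inv_mul _ hWd
    rw [hWdef, Matrix.mul_add, Matrix.mul_smul] at h1
    exact eq_sub_of_add_eq h1
  have hcomm : A * B = B * A := by
    rw [hAeq]
    simp [sub_mul, mul_sub, Matrix.smul_mul, Matrix.mul_smul]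
  have hmain : A * A + ((-β₁) * β₂) • (B * B) = 1 - (2 * γ) • (A * B) := by
    rw [hcc, hAeq]
    simp only [sub_mul, mul_sub, one_mul, mul_one, Matrix.smul_mul, Matrix.mul_smul,
      smul_sub, smul_smul]
    module
  -- main eigenvalue analysis
  have key : ∀ lam : ℝ, (∃ u : Fin n ⊕ Fin n → ℝ, u ≠ 0 ∧ Abar *ᵥ u = lam • (P *ᵥ u)) →
      1 / 2 ≤ lam ^ 2 ∧ lam ^ 2 ≤ 1 := by
    intro lam ⟨u, hu0, heq⟩
    set x : Fin n → ℝ := u ∘ Sum.inl with hxdef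
    set y : Fin n → ℝ := u ∘ Sum.inr with hydef
    have hu' : u = Sum.elim x y := by funext i; cases i <;> rfl
    rw [hAbar, hP, hu', fromBlocks_mulVec, fromBlocks_mulVec] at heq
    have hE1 : (|β₂| • 𝒦) *ᵥ x + ((-(β₁ * |β₂|)) • Mx) *ᵥ y
        = lam • ((|β₂| • W) *ᵥ x) := by
      funext i
      have h := congrFun heq (Sum.inl i)
      simpa using h
    have hE2 : ((|β₁| * β₂) • Mx) *ᵥ x + (-(|β₁| • 𝒦)) *ᵥ y
        = lam • ((|β₁| • W) *ᵥ y) := by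
      funext i
      have h := congrFun heq (Sum.inr i)
      simpa using h
    -- divide the two equations by |β₂| resp. |β₁|
    have hv1 : 𝒦 *ᵥ x + (-β₁) • (Mx *ᵥ y) = lam • (W *ᵥ x) := by
      apply smul_right_injective (Fin n → ℝ) hb.ne'
      funext i
      have h := congrFun hE1 i
      simp only [Pi.add_apply, Pi.smul_apply, smul_mulVec, smul_eq_mul] at h ⊢
      linear_combination h
    have hv2 : β₂ • (Mx *ᵥ x) - 𝒦 *ᵥ y = lam • (W *ᵥ y) := by
      apply smul_right_injective (Fin n → ℝ) ha.ne'
      funext i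
      have h := congrFun hE2 i
      simp only [Pi.add_apply, Pi.sub_apply, Pi.smul_apply, Pi.neg_apply, neg_mulVec,
        smul_mulVec, smul_eq_mul] at h ⊢
      linear_combination h
    -- apply W⁻¹
    have h1 : lam • x = A *ᵥ x + (-β₁) • (B *ᵥ y) := by
      have h := congrArg (fun w => W⁻¹ *ᵥ w) hv1
      simp only [mulVec_add, mulVec_smul, mulVec_mulVec] at h
      rw [Matrix.nonsing_inv_mul _ hWd, one_mulVec] at h
      rw [← h]
    have h2 : lam • y = β₂ • (B *ᵥ x) - A *ᵥ y := by
      have h := congrArg (fun w => W⁻¹ *ᵥ w) hv2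
      simp only [mulVec_sub, mulVec_add, mulVec_smul, mulVec_mulVec] at h
      rw [Matrix.nonsing_inv_mul _ hWd, one_mulVec] at h
      rw [← h]
    -- squared-eigenvalue equations
    have e1 : lam • (A *ᵥ x) = (A * A) *ᵥ x + (-β₁) • ((A * B) *ᵥ y) := by
      have h := congrArg (fun w => A *ᵥ w) h1
      simp only [mulVec_add, mulVec_smul, mulVec_mulVec] at h
      rw [← h]
    have e2 : lam • (B *ᵥ y) = β₂ • ((B * B) *ᵥ x) - (B * A) *ᵥ y := by
      have h := congrArg (fun w => B *ᵥ w) h2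
      simp only [mulVec_sub, mulVec_smul, mulVec_mulVec] at h
      rw [← h]
    have e3 : lam • (B *ᵥ x) = (B * A) *ᵥ x + (-β₁) • ((B * B) *ᵥ y) := by
      have h := congrArg (fun w => B *ᵥ w) h1
      simp only [mulVec_add, mulVec_smul, mulVec_mulVec] at h
      rw [← h]
    have e4 : lam • (A *ᵥ y) = β₂ • ((A * B) *ᵥ x) - (A * A) *ᵥ y := by
      have h := congrArg (fun w => A *ᵥ w) h2
      simp only [mulVec_sub, mulVec_smul, mulVec_mulVec] at h
      rw [← h]
    have hsqx : (lam ^ 2) • x = (A * A) *ᵥ x + ((-β₁) * β₂) • ((B * B) *ᵥ x) := by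
      calc (lam ^ 2) • x = lam • (lam • x) := by rw [smul_smul]; ring_nf
        _ = lam • (A *ᵥ x) + (-β₁) • (lam • (B *ᵥ y)) := by
            rw [h1, smul_add, smul_comm lam (-β₁)]
        _ = ((A * A) *ᵥ x + (-β₁) • ((A * B) *ᵥ y))
            + (-β₁) • (β₂ • ((B * B) *ᵥ x) - (A * B) *ᵥ y) := by rw [e1, e2, hcomm]
        _ = (A * A) *ᵥ x + ((-β₁) * β₂) • ((B * B) *ᵥ x) := by
            simp only [smul_sub, smul_smul]
            abel
    have hsqy : (lam ^ 2) • y = (A * A) *ᵥ y + ((-β₁) * β₂) • ((B * B) *ᵥ y) := by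
      calc (lam ^ 2) • y = lam • (lam • y) := by rw [smul_smul]; ring_nf
        _ = β₂ • (lam • (B *ᵥ x)) - lam • (A *ᵥ y) := by
            rw [h2, smul_sub, smul_comm lam β₂]
        _ = β₂ • ((A * B) *ᵥ x + (-β₁) • ((B * B) *ᵥ y))
            - (β₂ • ((A * B) *ᵥ x) - (A * A) *ᵥ y) := by rw [e3, e4, hcomm]
        _ = (A * A) *ᵥ y + ((-β₁) * β₂) • ((B * B) *ᵥ y) := by
            simp only [smul_add, smul_smul, mul_comm β₂ (-β₁)]
            abel
    -- pick a nonzero component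
    obtain ⟨v, hv0, hsqv⟩ : ∃ v : Fin n → ℝ, v ≠ 0 ∧
        (lam ^ 2) • v = (A * A) *ᵥ v + ((-β₁) * β₂) • ((B * B) *ᵥ v) := by
      by_cases hx : x = 0
      · refine ⟨y, fun hy => hu0 ?_, hsqy⟩
        rw [hu', hx, hy]
        funext i; cases i <;> rfl
      · exact ⟨x, hx, hsqx⟩
    -- reduce to the quarter lemma
    have hμeq : ((𝒦 + γ • Mx)⁻¹ * 𝒦 * ((𝒦 + γ • Mx)⁻¹ * (γ • Mx))) *ᵥ v
        = ((1 - lam ^ 2) / 2) • v := by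
      have hM0 : (𝒦 + γ • Mx)⁻¹ * 𝒦 * ((𝒦 + γ • Mx)⁻¹ * (γ • Mx)) = γ • (A * B) := by
        rw [← hWdef, ← hAdef, Matrix.mul_smul, ← hBdef, Matrix.mul_smul]
      rw [hM0]
      have hs : (lam ^ 2) • v = v - (2 * γ) • ((A * B) *ᵥ v) := by
        rw [hsqv, ← smul_mulVec, ← add_mulVec, hmain, sub_mulVec, one_mulVec,
          smul_mulVec]
      have hs2 : (2 * γ) • ((A * B) *ᵥ v) = (1 - lam ^ 2) • v := by
        rw [sub_smul, one_smul, hs]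
        abel
      rw [smul_mulVec]
      apply smul_right_injective (Fin n → ℝ) (two_ne_zero (α := ℝ))
      show (2:ℝ) • (γ • ((A * B) *ᵥ v)) = (2:ℝ) • (((1 - lam ^ 2) / 2) • v)
      rw [smul_smul, smul_smul, show (2:ℝ) * ((1 - lam ^ 2) / 2) = 1 - lam ^ 2 by ring]
      exact hs2
    have hq := quarter hG hH hv0 hμeq
    constructor
    · linarith [hq.2]
    · linarith [hq.1]
  -- conclude
  have main : ∀ lam : ℝ, (∃ u : Fin n ⊕ Fin n → ℝ, u ≠ 0 ∧ Abar *ᵥ u = lam • (P *ᵥ u)) →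
      1 / Real.sqrt 2 ≤ |lam| ∧ |lam| ≤ 1 := by
    intro lam hlam
    obtain ⟨hlo, hhi⟩ := key lam hlam
    constructor
    · have h2 : Real.sqrt (1 / 2) ≤ Real.sqrt (lam ^ 2) := Real.sqrt_le_sqrt (by linarith)
      rw [Real.sqrt_sq_eq_abs] at h2
      have : Real.sqrt (1 / 2) = 1 / Real.sqrt 2 := by
        rw [one_div, one_div, Real.sqrt_inv]
      rw [this] at h2
      exact h2
    · nlinarith [sq_abs lam, abs_nonneg lam]
  refine ⟨main, fun lam mu hlam hmu => ?_⟩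
  obtain ⟨-, h1⟩ := main lam hlam
  obtain ⟨h2, -⟩ := main mu hmu
  have hs2 : (0:ℝ) < Real.sqrt 2 := Real.sqrt_pos.mpr (by norm_num)
  have : Real.sqrt 2 * (1 / Real.sqrt 2) = 1 := by
    rw [mul_one_div, div_self hs2.ne']
  nlinarith [mul_le_mul_of_nonneg_left h2 hs2.le]
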